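/- Let p > 0, μ > 0, E > 0 and let F ∈ L²(ℝ, ℂ) satisfy ∫_ℝ |F(ξ)|² (1 + ξ²)^p dξ ≤ E². Then ‖F(ξ) − F(ξ)/(1 + μ²ξ²)‖_{L²} ≤ E max{μ², μ^p}. -/

import Mathlib

open MeasureTheory ENNReal

lemma key_ineq (p μ : ℝ) (hp : 0 < p) (hμ : 0 < μ) (ξ : ℝ) :
    μ ^ 2 * ξ ^ 2 / (1 + μ ^ 2 * ξ ^ 2) ≤ max (μ ^ 2) (μ ^ p) * (1 + ξ ^ 2) ^ (p / 2) := by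
  have hA : (0:ℝ) ≤ μ ^ 2 * ξ ^ 2 := by positivity
  have h1A : (0:ℝ) < 1 + μ ^ 2 * ξ ^ 2 := by positivity
  have hbase : (1:ℝ) ≤ 1 + ξ ^ 2 := by nlinarith [sq_nonneg ξ]
  have hR : (0:ℝ) < (1 + ξ ^ 2) ^ (p / 2) := Real.rpow_pos_of_pos (by positivity) _
  rcases le_or_gt (μ ^ 2 * ξ ^ 2) 1 with h | h
  · have hle : μ ^ 2 * ξ ^ 2 / (1 + μ ^ 2 * ξ ^ 2) ≤ μ ^ 2 * ξ ^ 2 := by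
      rw [div_le_iff₀ h1A]; nlinarith
    refine hle.trans ?_
    rcases le_or_gt 2 p with hp2 | hp2
    · have h1 : (1 + ξ ^ 2) ≤ (1 + ξ ^ 2) ^ (p / 2) := by
        calc (1 + ξ ^ 2) = (1 + ξ ^ 2) ^ (1:ℝ) := (Real.rpow_one _).symm
          _ ≤ _ := Real.rpow_le_rpow_of_exponent_le hbase (by linarith)
      have h2 : μ ^ 2 * ξ ^ 2 ≤ μ ^ 2 * (1 + ξ ^ 2) ^ (p / 2) := by nlinarith [sq_nonneg μ]
      exact h2.trans (mul_le_mul_of_nonneg_right (le_max_left _ _) hR.le)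
    · rcases hA.eq_or_lt with h0 | h0
      · rw [← h0]; positivity
      · have hA1 : (μ ^ 2 * ξ ^ 2) ^ (1:ℝ) ≤ (μ ^ 2 * ξ ^ 2) ^ (p / 2) :=
          Real.rpow_le_rpow_of_exponent_ge h0 h (by linarith)
        rw [Real.rpow_one] at hA1
        have heq : (μ ^ 2 * ξ ^ 2) ^ (p / 2) = μ ^ p * (ξ ^ 2) ^ (p / 2) := by
          rw [Real.mul_rpow (by positivity) (by positivity), ← Real.rpow_natCast μ 2,
            ← Real.rpow_mul hμ.le]
          norm_num; left; congr 1; ring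
        have h3 : (ξ ^ 2) ^ (p / 2) ≤ (1 + ξ ^ 2) ^ (p / 2) :=
          Real.rpow_le_rpow (sq_nonneg ξ) (by linarith) (by linarith)
        have h4 : (0:ℝ) < μ ^ p := Real.rpow_pos_of_pos hμ _
        calc μ ^ 2 * ξ ^ 2 ≤ μ ^ p * (ξ ^ 2) ^ (p / 2) := by rw [← heq]; exact hA1
          _ ≤ μ ^ p * (1 + ξ ^ 2) ^ (p / 2) := by nlinarith
          _ ≤ _ := mul_le_mul_of_nonneg_right (le_max_right _ _) hR.le
  · have hle : μ ^ 2 * ξ ^ 2 / (1 + μ ^ 2 * ξ ^ 2) ≤ 1 := by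
      rw [div_le_one h1A]; linarith
    refine hle.trans ?_
    have heq : μ ^ p * (1 + ξ ^ 2) ^ (p / 2) = (μ ^ 2 * (1 + ξ ^ 2)) ^ (p / 2) := by
      rw [Real.mul_rpow (by positivity) (by positivity), ← Real.rpow_natCast μ 2,
        ← Real.rpow_mul hμ.le]
      norm_num; left; congr 1; ring
    have h1 : (1:ℝ) ≤ μ ^ 2 * (1 + ξ ^ 2) := by nlinarith
    have h2 : (1:ℝ) ≤ (μ ^ 2 * (1 + ξ ^ 2)) ^ (p / 2) :=
      Real.one_le_rpow h1 (by linarith)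
    calc (1:ℝ) ≤ μ ^ p * (1 + ξ ^ 2) ^ (p / 2) := by rw [heq]; exact h2
      _ ≤ _ := mul_le_mul_of_nonneg_right (le_max_right _ _) hR.le

lemma norm_eq_aux (μ : ℝ) (hμ : 0 < μ) (z : ℂ) (ξ : ℝ) :
    ‖z - z / ((1 + μ ^ 2 * ξ ^ 2 : ℝ) : ℂ)‖
      = ‖z‖ * (μ ^ 2 * ξ ^ 2 / (1 + μ ^ 2 * ξ ^ 2)) := by
  have h1A : (0:ℝ) < 1 + μ ^ 2 * ξ ^ 2 := by positivity
  have hc : ((1 + μ ^ 2 * ξ ^ 2 : ℝ) : ℂ) ≠ 0 := by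
    exact_mod_cast h1A.ne'
  have heq : z - z / ((1 + μ ^ 2 * ξ ^ 2 : ℝ) : ℂ)
      = z * ((μ ^ 2 * ξ ^ 2 / (1 + μ ^ 2 * ξ ^ 2) : ℝ) : ℂ) := by
    have hc2 : (1 + (μ:ℂ) ^ 2 * (ξ:ℂ) ^ 2) ≠ 0 := by push_cast at hc; exact hc
    push_cast
    field_simp
    ring
  rw [heq, norm_mul, Complex.norm_real, Real.norm_of_nonneg (by positivity)]

/-- Bias estimate: if `F ∈ L²(ℝ, ℂ)` satisfies the a priori Sobolev bound
`∫ |F(ξ)|²(1 + ξ²)^p dξ ≤ E²`, then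
`‖F(ξ) − F(ξ)/(1 + μ²ξ²)‖_{L²} ≤ E·max{μ², μ^p}`. -/
theorem stmt_6 (p μ E : ℝ) (hp : 0 < p) (hμ : 0 < μ) (hE : 0 < E) (F : ℝ → ℂ)
    (hF : MemLp F 2 (volume : Measure ℝ))
    (hsob : ∫⁻ ξ : ℝ, (‖F ξ‖₊ : ℝ≥0∞) ^ 2 * ENNReal.ofReal ((1 + ξ ^ 2) ^ p) ≤
      ENNReal.ofReal (E ^ 2)) :
    eLpNorm (fun ξ : ℝ => F ξ - F ξ / ((1 + μ ^ 2 * ξ ^ 2 : ℝ) : ℂ)) 2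
        (volume : Measure ℝ) ≤
      ENNReal.ofReal (E * max (μ ^ 2) (μ ^ p)) := by
  set m : ℝ := max (μ ^ 2) (μ ^ p) with hm_def
  have hm : (0:ℝ) < m := lt_max_of_lt_left (by positivity)
  set g : ℝ → ℂ := fun ξ => F ξ - F ξ / ((1 + μ ^ 2 * ξ ^ 2 : ℝ) : ℂ) with hg_def
  -- pointwise bound on squared nnnorm
  have hpt : ∀ ξ : ℝ, (‖g ξ‖₊ : ℝ≥0∞) ^ 2
      ≤ ENNReal.ofReal (m ^ 2) * ((‖F ξ‖₊ : ℝ≥0∞) ^ 2 * ENNReal.ofReal ((1 + ξ ^ 2) ^ p)) := by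
    intro ξ
    have hr : (0:ℝ) ≤ μ ^ 2 * ξ ^ 2 / (1 + μ ^ 2 * ξ ^ 2) := by positivity
    have h1 : (‖g ξ‖₊ : ℝ≥0∞) = (‖F ξ‖₊ : ℝ≥0∞)
        * ENNReal.ofReal (μ ^ 2 * ξ ^ 2 / (1 + μ ^ 2 * ξ ^ 2)) := by
      rw [← enorm_eq_nnnorm, ← enorm_eq_nnnorm, ← ofReal_norm, ← ofReal_norm, hg_def]
      simp only
      rw [norm_eq_aux μ hμ, ENNReal.ofReal_mul (norm_nonneg _)]
    rw [h1, mul_pow]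
    have h2 : (ENNReal.ofReal (μ ^ 2 * ξ ^ 2 / (1 + μ ^ 2 * ξ ^ 2))) ^ 2
        ≤ ENNReal.ofReal (m ^ 2) * ENNReal.ofReal ((1 + ξ ^ 2) ^ p) := by
      have hkey := key_ineq p μ hp hμ ξ
      have h3 : (ENNReal.ofReal (μ ^ 2 * ξ ^ 2 / (1 + μ ^ 2 * ξ ^ 2))) ^ 2
          ≤ (ENNReal.ofReal (m * (1 + ξ ^ 2) ^ (p / 2))) ^ 2 :=
        pow_le_pow_left' (ENNReal.ofReal_le_ofReal hkey) 2
      refine h3.trans ?_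
      rw [← ENNReal.ofReal_pow (by positivity), ← ENNReal.ofReal_mul (by positivity)]
      apply ENNReal.ofReal_le_ofReal
      have : ((1 + ξ ^ 2) ^ (p / 2)) ^ 2 = (1 + ξ ^ 2) ^ p := by
        rw [← Real.rpow_natCast ((1 + ξ ^ 2) ^ (p / 2)) 2, ← Real.rpow_mul (by positivity)]
        norm_num
      rw [mul_pow, this]
    calc (‖F ξ‖₊ : ℝ≥0∞) ^ 2 * (ENNReal.ofReal (μ ^ 2 * ξ ^ 2 / (1 + μ ^ 2 * ξ ^ 2))) ^ 2
        ≤ (‖F ξ‖₊ : ℝ≥0∞) ^ 2 * (ENNReal.ofReal (m ^ 2) * ENNReal.ofReal ((1 + ξ ^ 2) ^ p)) :=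
          mul_le_mul_right h2 _
      _ = ENNReal.ofReal (m ^ 2) * ((‖F ξ‖₊ : ℝ≥0∞) ^ 2 * ENNReal.ofReal ((1 + ξ ^ 2) ^ p)) := by
          ring
  -- integral bound
  have hint : ∫⁻ ξ : ℝ, (‖g ξ‖₊ : ℝ≥0∞) ^ 2 ≤ ENNReal.ofReal ((E * m) ^ 2) := by
    calc ∫⁻ ξ : ℝ, (‖g ξ‖₊ : ℝ≥0∞) ^ 2
        ≤ ∫⁻ ξ : ℝ, ENNReal.ofReal (m ^ 2)
            * ((‖F ξ‖₊ : ℝ≥0∞) ^ 2 * ENNReal.ofReal ((1 + ξ ^ 2) ^ p)) :=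
          lintegral_mono hpt
      _ = ENNReal.ofReal (m ^ 2)
            * ∫⁻ ξ : ℝ, (‖F ξ‖₊ : ℝ≥0∞) ^ 2 * ENNReal.ofReal ((1 + ξ ^ 2) ^ p) :=
          lintegral_const_mul' _ _ ENNReal.ofReal_ne_top
      _ ≤ ENNReal.ofReal (m ^ 2) * ENNReal.ofReal (E ^ 2) := mul_le_mul_right hsob _
      _ = ENNReal.ofReal ((E * m) ^ 2) := by
          rw [← ENNReal.ofReal_mul (by positivity)]; congr 1; ring
  -- conclude
  have h2 : eLpNorm g 2 (volume : Measure ℝ)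
      = (∫⁻ ξ : ℝ, (‖g ξ‖₊ : ℝ≥0∞) ^ 2) ^ (1 / (2:ℝ)) := by
    rw [eLpNorm_eq_lintegral_rpow_enorm_toReal (by norm_num) (by norm_num)]
    norm_num
    rfl
  rw [h2]
  calc (∫⁻ ξ : ℝ, (‖g ξ‖₊ : ℝ≥0∞) ^ 2) ^ (1 / (2:ℝ))
      ≤ (ENNReal.ofReal ((E * m) ^ 2)) ^ (1 / (2:ℝ)) :=
        ENNReal.rpow_le_rpow hint (by norm_num)
    _ = ENNReal.ofReal (E * m) := by
        rw [ENNReal.ofReal_pow (by positivity), ← ENNReal.rpow_natCast, ← ENNReal.rpow_mul]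
        norm_num
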